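/- Let A and Ã be 2×4 real matrices, each of rank 2, and suppose there is a nonzero real constant c such that for all column indices i < j the minors satisfy A_{ij} = c * Ã_{ij} (i.e. the Plücker coordinates of the two sets of boundary conditions are identical as projective tuples). Then for every vector X ∈ ℝ⁴, A.mulVec X = 0 if and only if Ã.mulVec X = 0. -/

import Mathlib

/-- The 2×2 minor of a 2×4 matrix formed by columns `i` and `j`. -/
def minor (M : Matrix (Fin 2) (Fin 4) ℝ) (i j : Fin 4) : ℝ :=
  M 0 i * M 1 j - M 0 j * M 1 i

/-- A rank-2 `2×4` matrix has some nonzero `2×2` minor. -/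
lemma exists_minor_ne_zero (M : Matrix (Fin 2) (Fin 4) ℝ) (hr : M.rank = 2) :
    ∃ p q, minor M p q ≠ 0 := by
  by_contra h
  push_neg at h
  have htop : LinearMap.range M.mulVecLin = ⊤ := by
    apply Submodule.eq_top_of_finrank_eq
    have : Module.finrank ℝ (LinearMap.range M.mulVecLin) = M.rank := rfl
    rw [this, hr]
    simp
  have hsurj : Function.Surjective M.mulVecLin := LinearMap.range_eq_top.mp htop
  by_cases h0 : ∀ p, M 0 p = 0
  · obtain ⟨X, hX⟩ := hsurj ![1, 0]
    have := congrFun hX 0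
    simp [Matrix.mulVecLin_apply, Matrix.mulVec, dotProduct, h0] at this
  · push_neg at h0
    obtain ⟨p, hp⟩ := h0
    obtain ⟨X, hX⟩ := hsurj ![0, 1]
    have h1 := congrFun hX 1
    have h0' := congrFun hX 0
    simp [Matrix.mulVecLin_apply, Matrix.mulVec, dotProduct] at h1 h0'
    have hdep : ∀ k, M 0 p * M 1 k = M 0 k * M 1 p := by
      intro k
      have := h p k
      unfold minor at this
      linarith
    have : M 0 p * ∑ k, M 1 k * X k = M 1 p * ∑ k, M 0 k * X k := by
      rw [Finset.mul_sum, Finset.mul_sum]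
      apply Finset.sum_congr rfl
      intro k _
      linear_combination X k * hdep k
    rw [h1, h0'] at this
    simp at this
    exact hp this

/-- If the minors of `A` are `c` times those of `B`, and `A` has a nonzero minor,
then each row of `B` is a linear combination of the rows of `A`. -/
lemma row_mem_span (A B : Matrix (Fin 2) (Fin 4) ℝ) (c : ℝ)
    (hm : ∀ i j, minor A i j = c * minor B i j)
    (p q : Fin 4) (hpq : minor A p q ≠ 0) (r : Fin 2) :
    ∃ lam mu : ℝ, ∀ k, B r k = lam * A 0 k + mu * A 1 k := by
  refine ⟨(B r p * A 1 q - B r q * A 1 p) / minor A p q,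
          (A 0 p * B r q - A 0 q * B r p) / minor A p q, fun k => ?_⟩
  have key : B r k * minor A p q - B r p * minor A k q + B r q * minor A k p = 0 := by
    rw [hm p q, hm k q, hm k p]
    unfold minor
    have hr2 : r = 0 ∨ r = 1 := by omega
    rcases hr2 with rfl | rfl <;> ring
  rw [div_mul_eq_mul_div, div_mul_eq_mul_div, ← add_div, eq_div_iff hpq]
  unfold minor at key ⊢
  linear_combination key

lemma ker_subset (A B : Matrix (Fin 2) (Fin 4) ℝ) (c : ℝ)
    (hm : ∀ i j, minor A i j = c * minor B i j)
    (p q : Fin 4) (hpq : minor A p q ≠ 0)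
    (X : Fin 4 → ℝ) (hX : A.mulVec X = 0) : B.mulVec X = 0 := by
  funext r
  obtain ⟨lam, mu, h⟩ := row_mem_span A B c hm p q hpq r
  have h0 := congrFun hX 0
  have h1 := congrFun hX 1
  simp [Matrix.mulVec, dotProduct] at h0 h1 ⊢
  have : ∀ k, B r k * X k = lam * (A 0 k * X k) + mu * (A 1 k * X k) := by
    intro k; rw [h k]; ring
  rw [Finset.sum_congr rfl fun k _ => this k, Finset.sum_add_distrib,
    ← Finset.mul_sum, ← Finset.mul_sum, h0, h1]
  ring

theorem same_solutions_of_proportional_minors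
    (A Atilde : Matrix (Fin 2) (Fin 4) ℝ)
    (hrA : A.rank = 2) (hrAt : Atilde.rank = 2)
    (c : ℝ) (hc : c ≠ 0)
    (hminors : ∀ i j : Fin 4, i < j → minor A i j = c * minor Atilde i j) :
    ∀ X : Fin 4 → ℝ, A.mulVec X = 0 ↔ Atilde.mulVec X = 0 := by
  have hm : ∀ i j, minor A i j = c * minor Atilde i j := by
    intro i j
    rcases lt_trichotomy i j with h | h | h
    · exact hminors i j h
    · subst h; unfold minor; ring
    · have h2 := hminors j i h
      unfold minor at h2 ⊢
      linear_combination -h2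
  have hm' : ∀ i j, minor Atilde i j = c⁻¹ * minor A i j := by
    intro i j
    rw [hm i j]
    field_simp
  obtain ⟨p, q, hpq⟩ := exists_minor_ne_zero A hrA
  obtain ⟨p', q', hpq'⟩ := exists_minor_ne_zero Atilde hrAt
  intro X
  constructor
  · exact ker_subset A Atilde c hm p q hpq X
  · exact ker_subset Atilde A c⁻¹ hm' p' q' hpq' X
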